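/- For k = 1, …, n, let A be a finite nonempty set with distinguished elements a*_k ∈ A, let Z > 0, b ∈ ℝ, δ ∈ (0,1) with 2n|A| > δ, c ≥ 1, and for each k let {X^{(k)}_{a,i} : a ∈ A, 1 ≤ i ≤ c} be real random variables on a common probability space, taking values almost surely in [b, b + Z], such that for each fixed k the family {X^{(k)}_{a,i}} is mutually independent and for each a the variables X^{(k)}_{a,1}, …, X^{(k)}_{a,c} are identically distributed with mean Q_k(a). Suppose that for every k, Q_k(a*_k) ≥ Q_k(a) + Z·√(2·log(2n|A|/δ)/c) for all a ≠ a*_k. Let Q̂_k(a) = (1/c)∑_{i=1}^c X^{(k)}_{a,i}. Then P(∃ k and a ≠ a*_k with Q̂_k(a) ≥ Q̂_k(a*_k)) ≤ δ. -/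

import Mathlib

set_option maxHeartbeats 1000000

open MeasureTheory ProbabilityTheory
open Real

section HoeffdingAux


lemma hoeffding_pos {p : ℝ} (hp0 : 0 ≤ p) (hp1 : p ≤ 1) (v : ℝ) :
    0 < 1 - p + p * Real.exp v := by
  have h1 : 0 ≤ p * Real.exp v := mul_nonneg hp0 (Real.exp_pos v).le
  rcases lt_or_ge p 1 with h | h
  · linarith
  · have hp : p = 1 := le_antisymm hp1 h
    subst hp
    have := Real.exp_pos v
    linarith

lemma hoeffding_aux {p : ℝ} (hp0 : 0 ≤ p) (hp1 : p ≤ 1) (u : ℝ) :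
    (1 - p) * Real.exp (-(p * u)) + p * Real.exp ((1 - p) * u) ≤ Real.exp (u ^ 2 / 8) := by
  set F : ℝ → ℝ := fun u => p * u + u ^ 2 / 8 - Real.log (1 - p + p * Real.exp u) with hFdef
  set G : ℝ → ℝ := fun u => p + u / 4 - p * Real.exp u / (1 - p + p * Real.exp u) with hGdef
  have hpos := hoeffding_pos hp0 hp1
  have hF : ∀ x : ℝ, HasDerivAt F (G x) x := by
    intro x
    have h1 : HasDerivAt (fun y : ℝ => 1 - p + p * Real.exp y) (p * Real.exp x) x :=
      ((Real.hasDerivAt_exp x).const_mul p).const_add (1 - p)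
    have h2 : HasDerivAt (fun y : ℝ => Real.log (1 - p + p * Real.exp y))
        (p * Real.exp x / (1 - p + p * Real.exp x)) x := h1.log (hpos x).ne'
    have h3 : HasDerivAt (fun y : ℝ => p * y + y ^ 2 / 8)
        (p * 1 + (2:ℕ) * x ^ (2-1) / 8) x :=
      (hasDerivAt_id x |>.const_mul p).add ((hasDerivAt_pow 2 x).div_const 8)
    have := h3.sub h2
    refine this.congr_deriv ?_
    simp only [hGdef]; norm_num; ring
  have hG : ∀ x : ℝ, HasDerivAt G
      (1 / 4 - p * (1 - p) * Real.exp x / (1 - p + p * Real.exp x) ^ 2) x := by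
    intro x
    have h1 : HasDerivAt (fun y : ℝ => 1 - p + p * Real.exp y) (p * Real.exp x) x :=
      ((Real.hasDerivAt_exp x).const_mul p).const_add (1 - p)
    have h2 : HasDerivAt (fun y : ℝ => p * Real.exp y) (p * Real.exp x) x :=
      (Real.hasDerivAt_exp x).const_mul p
    have h3 : HasDerivAt (fun y : ℝ => p * Real.exp y / (1 - p + p * Real.exp y))
        ((p * Real.exp x * (1 - p + p * Real.exp x) - p * Real.exp x * (p * Real.exp x)) /
          (1 - p + p * Real.exp x) ^ 2) x := h2.div h1 (hpos x).ne'
    have h4 : HasDerivAt (fun y : ℝ => p + y / 4) (1 / 4) x := by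
      simpa using ((hasDerivAt_id x).div_const 4).const_add p
    have := h4.sub h3
    refine this.congr_deriv ?_
    have hne := (hpos x).ne'
    field_simp
    ring
  have hG' : ∀ x : ℝ, 0 ≤ 1 / 4 - p * (1 - p) * Real.exp x / (1 - p + p * Real.exp x) ^ 2 := by
    intro x
    have hne := hpos x
    rw [sub_nonneg, div_le_iff₀ (by positivity)]
    nlinarith [sq_nonneg ((1 - p) - p * Real.exp x), Real.exp_pos x]
  have hGmono : Monotone G :=
    monotone_of_deriv_nonneg (fun x => (hG x).differentiableAt)
      (fun x => by rw [(hG x).deriv]; exact hG' x)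
  have hG0 : G 0 = 0 := by
    simp [hGdef]
  have hFcont : Continuous F := by
    have : Differentiable ℝ F := fun x => (hF x).differentiableAt
    exact this.continuous
  have hFnonneg : 0 ≤ F u := by
    have hF0 : F 0 = 0 := by simp [hFdef]
    rcases le_total 0 u with hu | hu
    · have hmono : MonotoneOn F (Set.Ici 0) := by
        refine monotoneOn_of_deriv_nonneg (convex_Ici 0) hFcont.continuousOn
          (fun x _ => (hF x).differentiableAt.differentiableWithinAt) ?_
        intro x hx
        rw [(hF x).deriv]
        rw [interior_Ici] at hx
        calc (0:ℝ) = G 0 := hG0.symm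
          _ ≤ G x := hGmono (le_of_lt hx)
      have := hmono (Set.self_mem_Ici) (Set.mem_Ici.2 hu) hu
      linarith [hF0 ▸ this]
    · have hmono : AntitoneOn F (Set.Iic 0) := by
        refine antitoneOn_of_deriv_nonpos (convex_Iic 0) hFcont.continuousOn
          (fun x _ => (hF x).differentiableAt.differentiableWithinAt) ?_
        intro x hx
        rw [(hF x).deriv]
        rw [interior_Iic] at hx
        calc G x ≤ G 0 := hGmono (le_of_lt hx)
          _ = 0 := hG0
      have := hmono (Set.mem_Iic.2 hu) (Set.self_mem_Iic) hu
      linarith [hF0 ▸ this]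
  -- from F u ≥ 0 : log (1-p+p e^u) ≤ p u + u^2/8
  have hlog : 1 - p + p * Real.exp u ≤ Real.exp (p * u + u ^ 2 / 8) := by
    have : Real.log (1 - p + p * Real.exp u) ≤ p * u + u ^ 2 / 8 := by
      simp only [hFdef] at hFnonneg; linarith
    calc 1 - p + p * Real.exp u = Real.exp (Real.log (1 - p + p * Real.exp u)) :=
          (Real.exp_log (hpos u)).symm
      _ ≤ _ := Real.exp_le_exp.2 this
  have key : Real.exp (-(p * u)) * (1 - p + p * Real.exp u) ≤ Real.exp (u ^ 2 / 8) := by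
    calc Real.exp (-(p * u)) * (1 - p + p * Real.exp u)
        ≤ Real.exp (-(p * u)) * Real.exp (p * u + u ^ 2 / 8) := by
          exact mul_le_mul_of_nonneg_left hlog (Real.exp_pos _).le
      _ = Real.exp (u ^ 2 / 8) := by rw [← Real.exp_add]; ring_nf
  calc (1 - p) * Real.exp (-(p * u)) + p * Real.exp ((1 - p) * u)
      = Real.exp (-(p * u)) * (1 - p + p * Real.exp u) := by
        rw [mul_add]
        congr 1
        · ring
        · rw [mul_comm (Real.exp (-(p*u))) (p * Real.exp u), mul_assoc, ← Real.exp_add]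
          ring_nf
    _ ≤ _ := key

section

variable {Ω : Type*} [MeasurableSpace Ω] (P : Measure Ω) [IsProbabilityMeasure P]

lemma integrable_of_bdd {V : Ω → ℝ} (hV : Measurable V) {α β : ℝ}
    (h : ∀ᵐ ω ∂P, V ω ∈ Set.Icc α β) : Integrable V P := by
  refine Integrable.mono' (integrable_const (max |α| |β|)) hV.aestronglyMeasurable ?_
  filter_upwards [h] with ω hω
  exact abs_le_max_abs_abs hω.1 hω.2

lemma integrable_exp_of_bdd {V : Ω → ℝ} (hV : Measurable V) {α β : ℝ} (t : ℝ)
    (h : ∀ᵐ ω ∂P, V ω ∈ Set.Icc α β) :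
    Integrable (fun ω => Real.exp (t * V ω)) P := by
  refine Integrable.mono' (integrable_const (Real.exp (|t| * max |α| |β|)))
    ((hV.const_mul t).exp.aestronglyMeasurable) ?_
  filter_upwards [h] with ω hω
  rw [Real.norm_eq_abs, Real.abs_exp]
  refine Real.exp_le_exp.2 ?_
  calc t * V ω ≤ |t * V ω| := le_abs_self _
    _ = |t| * |V ω| := abs_mul _ _
    _ ≤ |t| * max |α| |β| :=
        mul_le_mul_of_nonneg_left (abs_le_max_abs_abs hω.1 hω.2) (abs_nonneg t)

/-- Hoeffding's lemma for a centered bounded random variable. -/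
lemma hoeffding_mgf_centered {V : Ω → ℝ} (hV : Measurable V) {α β : ℝ} (hab : α < β)
    (h : ∀ᵐ ω ∂P, V ω ∈ Set.Icc α β) (hmean : ∫ ω, V ω ∂P = 0) (t : ℝ) :
    mgf V P t ≤ Real.exp (t ^ 2 * (β - α) ^ 2 / 8) := by
  have hVint : Integrable V P := integrable_of_bdd P hV h
  have hba : (0:ℝ) < β - α := sub_pos.2 hab
  have hα : α ≤ 0 := by
    have : ∫ ω, (α:ℝ) ∂P ≤ ∫ ω, V ω ∂P :=
      integral_mono_ae (integrable_const α) hVint (h.mono fun ω hω => hω.1)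
    simpa [hmean] using this
  have hβ : 0 ≤ β := by
    have : ∫ ω, V ω ∂P ≤ ∫ ω, (β:ℝ) ∂P :=
      integral_mono_ae hVint (integrable_const β) (h.mono fun ω hω => hω.2)
    simpa [hmean] using this
  set p : ℝ := -α / (β - α) with hpdef
  have hp0 : 0 ≤ p := div_nonneg (neg_nonneg.2 hα) hba.le
  have hp1 : p ≤ 1 := by
    rw [hpdef, div_le_one hba]; linarith
  set u : ℝ := t * (β - α) with hudef
  -- pointwise convexity bound
  have hpt : ∀ᵐ ω ∂P, Real.exp (t * V ω) ≤
      Real.exp (t * α) / (β - α) * (β - V ω) + Real.exp (t * β) / (β - α) * (V ω - α) := by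
    filter_upwards [h] with ω hω
    have ha' : 0 ≤ (β - V ω) / (β - α) := div_nonneg (by linarith [hω.2]) hba.le
    have hb' : 0 ≤ (V ω - α) / (β - α) := div_nonneg (by linarith [hω.1]) hba.le
    have hab1 : (β - V ω) / (β - α) + (V ω - α) / (β - α) = 1 := by
      field_simp
      ring
    have hconv := convexOn_exp.2 (Set.mem_univ (t * α)) (Set.mem_univ (t * β)) ha' hb' hab1
    have harg : ((β - V ω) / (β - α)) • (t * α) + ((V ω - α) / (β - α)) • (t * β) = t * V ω := by
      rw [smul_eq_mul, smul_eq_mul]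
      field_simp
      ring
    rw [harg] at hconv
    calc Real.exp (t * V ω) ≤ (β - V ω) / (β - α) * Real.exp (t * α)
          + (V ω - α) / (β - α) * Real.exp (t * β) := by
          simpa [smul_eq_mul] using hconv
      _ = Real.exp (t * α) / (β - α) * (β - V ω) + Real.exp (t * β) / (β - α) * (V ω - α) := by
          ring
  have hint1 : Integrable (fun ω => Real.exp (t * α) / (β - α) * (β - V ω)
      + Real.exp (t * β) / (β - α) * (V ω - α)) P := by
    exact (((integrable_const β).sub hVint).const_mul _).add
      ((hVint.sub (integrable_const α)).const_mul _)
  have hmgf : mgf V P t ≤ (1 - p) * Real.exp (-(p * u)) + p * Real.exp ((1 - p) * u) := by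
    have step1 : mgf V P t ≤ ∫ ω, (Real.exp (t * α) / (β - α) * (β - V ω)
        + Real.exp (t * β) / (β - α) * (V ω - α)) ∂P :=
      integral_mono_ae (integrable_exp_of_bdd P hV t h) hint1 hpt
    have step2 : ∫ ω, (Real.exp (t * α) / (β - α) * (β - V ω)
        + Real.exp (t * β) / (β - α) * (V ω - α)) ∂P
        = (1 - p) * Real.exp (t * α) + p * Real.exp (t * β) := by
      have i1 : Integrable (fun ω => Real.exp (t * α) / (β - α) * (β - V ω)) P :=
        ((integrable_const β).sub hVint).const_mul _
      have i2 : Integrable (fun ω => Real.exp (t * β) / (β - α) * (V ω - α)) P :=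
        (hVint.sub (integrable_const α)).const_mul _
      rw [integral_add i1 i2,
        integral_const_mul, integral_const_mul,
        integral_sub (integrable_const β) hVint, integral_sub hVint (integrable_const α),
        hmean, integral_const]
      simp only [measure_univ, ENNReal.toReal_one, one_smul, sub_zero, zero_sub, integral_const, probReal_univ, smul_eq_mul, one_mul]
      rw [hpdef]
      field_simp
      ring
    have hta : t * α = -(p * u) := by rw [hpdef, hudef]; field_simp
    have htb : t * β = (1 - p) * u := by rw [hpdef, hudef]; field_simp; ring
    rw [← hta, ← htb]
    exact step1.trans_eq step2
  refine hmgf.trans ((hoeffding_aux hp0 hp1 u).trans_eq ?_)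
  rw [hudef]; ring_nf

/-- Hoeffding's lemma: mgf bound for a bounded random variable. -/
lemma hoeffding_mgf {V : Ω → ℝ} (hV : Measurable V) {α β : ℝ} (hab : α < β)
    (h : ∀ᵐ ω ∂P, V ω ∈ Set.Icc α β) (t : ℝ) :
    mgf V P t ≤ Real.exp (t * (∫ ω, V ω ∂P) + t ^ 2 * (β - α) ^ 2 / 8) := by
  set m : ℝ := ∫ ω, V ω ∂P with hmdef
  have hVint : Integrable V P := integrable_of_bdd P hV h
  have hcent : mgf (fun ω => V ω - m) P t ≤ Real.exp (t ^ 2 * ((β - m) - (α - m)) ^ 2 / 8) := by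
    refine hoeffding_mgf_centered P (hV.sub measurable_const) (by linarith) ?_ ?_ t
    · filter_upwards [h] with ω hω
      exact ⟨by simp [hmdef, hω.1], by simp [hmdef, hω.2]⟩
    · show ∫ ω, (V ω - m) ∂P = 0
      rw [integral_sub hVint (integrable_const m), integral_const]
      simp [hmdef]
  have hfact : mgf V P t = Real.exp (t * m) * mgf (fun ω => V ω - m) P t := by
    unfold mgf
    rw [← integral_const_mul]
    congr 1
    ext ω
    rw [← Real.exp_add]
    ring_nf
  rw [hfact]
  calc Real.exp (t * m) * mgf (fun ω => V ω - m) P t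
      ≤ Real.exp (t * m) * Real.exp (t ^ 2 * ((β - m) - (α - m)) ^ 2 / 8) :=
        mul_le_mul_of_nonneg_left hcent (Real.exp_pos _).le
    _ = Real.exp (t * m + t ^ 2 * (β - α) ^ 2 / 8) := by
        rw [← Real.exp_add]; ring_nf

end

end HoeffdingAux

/-- Policy-improvement-step guarantee for the Fixed allocation algorithm: under
the acceptance condition at every one of the `n` grid states, the probability that
the empirically best action differs from the truly best action at any state is at
most `δ`, by a union bound over states. -/
theorem stmt_10 {Ω : Type*} [MeasurableSpace Ω] (P : Measure Ω) [IsProbabilityMeasure P]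
    (A : Type*) [Fintype A] [Nonempty A]
    (n : ℕ) (hn : 1 ≤ n) (astar : Fin n → A)
    (Z : ℝ) (hZ : 0 < Z) (b : ℝ)
    (δ : ℝ) (hδ : δ ∈ Set.Ioo (0 : ℝ) 1)
    (hnA : 2 * (n : ℝ) * (Fintype.card A : ℝ) > δ)
    (c : ℕ) (hc : 1 ≤ c)
    (X : Fin n → A → Fin c → Ω → ℝ) (hmeas : ∀ k a i, Measurable (X k a i))
    (hindep : ∀ k : Fin n,
      iIndepFun (fun p : A × Fin c => X k p.1 p.2) P)
    (hbound : ∀ k a i, ∀ᵐ ω ∂P, X k a i ω ∈ Set.Icc b (b + Z))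
    (Q : Fin n → A → ℝ) (hQ : ∀ k a i, Q k a = ∫ ω, X k a i ω ∂P)
    (hgap : ∀ k : Fin n, ∀ a : A, a ≠ astar k →
      Q k (astar k) ≥ Q k a +
        Z * Real.sqrt (2 * Real.log (2 * n * (Fintype.card A : ℝ) / δ) / c)) :
    P {ω | ∃ k : Fin n, ∃ a : A, a ≠ astar k ∧
        (1 / c : ℝ) * ∑ i, X k a i ω ≥ (1 / c : ℝ) * ∑ i, X k (astar k) i ω} ≤
      ENNReal.ofReal δ := by
  classical
  obtain ⟨hδ0, hδ1⟩ := hδ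
  set M : ℝ := 2 * n * (Fintype.card A : ℝ) with hMdef
  have hcard : (1:ℝ) ≤ (Fintype.card A : ℝ) := by
    exact_mod_cast Fintype.card_pos
  have hn' : (1:ℝ) ≤ (n:ℝ) := by exact_mod_cast hn
  have hc' : (1:ℝ) ≤ (c:ℝ) := by exact_mod_cast hc
  have hcpos : (0:ℝ) < (c:ℝ) := by linarith
  have hM2 : (2:ℝ) ≤ M := by nlinarith
  have hMpos : (0:ℝ) < M := by linarith
  set L : ℝ := Real.log (M / δ) with hLdef
  have hL : 0 ≤ L := Real.log_nonneg (by rw [le_div_iff₀ hδ0]; nlinarith)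
  set gp : ℝ := Z * Real.sqrt (2 * L / c) with hgpdef
  have hgp0 : 0 ≤ gp := mul_nonneg hZ.le (Real.sqrt_nonneg _)
  have hgp2 : gp ^ 2 = Z ^ 2 * (2 * L / c) := by
    rw [hgpdef, mul_pow, Real.sq_sqrt (by positivity)]
  set t : ℝ := 2 * gp / Z ^ 2 with htdef
  have ht0 : 0 ≤ t := by positivity
  -- the per-(k,a) events
  set E : Fin n → A → Set Ω := fun k a => {ω | a ≠ astar k ∧
      (1 / c : ℝ) * ∑ i, X k a i ω ≥ (1 / c : ℝ) * ∑ i, X k (astar k) i ω} with hEdef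
  -- key per-event bound
  have hkey : ∀ (k : Fin n) (a : A), P (E k a) ≤ ENNReal.ofReal (δ / M) := by
    intro k a
    by_cases hne : a = astar k
    · have : E k a = ∅ := by
        ext ω; simp [hEdef, hne]
      simp [this]
    · -- signed family
      set Y : A × Fin c → Ω → ℝ :=
        fun p ω => if p.1 = astar k then -X k p.1 p.2 ω else X k p.1 p.2 ω with hYdef
      have hYmeas : ∀ p, Measurable (Y p) := by
        intro p
        by_cases h : p.1 = astar k <;> simp only [hYdef, h, if_true, if_false, ite_true,
          ite_false] <;> [exact (hmeas k _ p.2).neg; exact hmeas k _ p.2]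
      have hYindep : iIndepFun Y P := by
        have := (hindep k).comp
          (fun p : A × Fin c => fun x : ℝ => if p.1 = astar k then -x else x)
          (fun p => by by_cases h : p.1 = astar k <;>
            simp only [h, if_true, if_false, ite_true, ite_false] <;>
            [exact measurable_neg; exact measurable_id])
        exact this
      have hYbd : ∀ p : A × Fin c, ∀ᵐ ω ∂P, Y p ω ∈
          Set.Icc (if p.1 = astar k then -(b+Z) else b) ((if p.1 = astar k then -(b+Z) else b) + Z) := by
        intro p
        filter_upwards [hbound k p.1 p.2] with ω hω
        by_cases h : p.1 = astar k
        · rw [h] at hω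
          simp only [hYdef, h, if_true, ite_true, Set.mem_Icc] at hω ⊢
          constructor <;> linarith [hω.1, hω.2]
        · simp only [hYdef, h, if_false, ite_false]
          exact hω
      have hYmean : ∀ p : A × Fin c, ∫ ω, Y p ω ∂P =
          (if p.1 = astar k then -Q k p.1 else Q k p.1) := by
        intro p
        by_cases h : p.1 = astar k <;> simp only [hYdef, h, if_true, if_false, ite_true, ite_false]
        · rw [integral_neg, ← hQ k (astar k) p.2]
        · rw [← hQ k p.1 p.2]
      -- per-term mgf bound
      have hmgf_le : ∀ p : A × Fin c, mgf (Y p) P t ≤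
          Real.exp (t * (if p.1 = astar k then -Q k p.1 else Q k p.1) + t ^ 2 * Z ^ 2 / 8) := by
        intro p
        have hab : (if p.1 = astar k then -(b+Z) else b) <
            (if p.1 = astar k then -(b+Z) else b) + Z := by linarith
        have := hoeffding_mgf P (hYmeas p) hab (hYbd p) t
        rw [hYmean p] at this
        simpa using this
      set s : Finset (A × Fin c) := ({a, astar k} : Finset A) ×ˢ Finset.univ with hsdef
      have hsum : ∀ ω, (∑ p ∈ s, Y p) ω = ∑ i, X k a i ω - ∑ i, X k (astar k) i ω := by
        intro ω
        rw [Finset.sum_apply]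
        rw [hsdef, Finset.sum_product]
        rw [Finset.sum_insert (by simpa using hne), Finset.sum_singleton]
        simp only [hYdef, hne, if_false, ite_false, if_true, ite_true]
        rw [Finset.sum_neg_distrib]
        ring
      -- Chernoff
      have hint : ∀ p ∈ s, Integrable (fun ω => Real.exp (t * Y p ω)) P :=
        fun p _ => integrable_exp_of_bdd P (hYmeas p) t (hYbd p)
      have hint_sum := hYindep.integrable_exp_mul_sum hYmeas hint
      have chern := measure_ge_le_exp_mul_mgf (μ := P) (X := ∑ p ∈ s, Y p) 0 ht0 hint_sum
      simp only [mul_zero, Real.exp_zero, one_mul] at chern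
      have hprod : mgf (∑ p ∈ s, Y p) P t = ∏ p ∈ s, mgf (Y p) P t :=
        hYindep.mgf_sum hYmeas s
      have hprod_le : ∏ p ∈ s, mgf (Y p) P t ≤
          Real.exp (∑ p ∈ s, (t * (if p.1 = astar k then -Q k p.1 else Q k p.1) + t ^ 2 * Z ^ 2 / 8)) := by
        rw [Real.exp_sum]
        exact Finset.prod_le_prod (fun p _ => mgf_nonneg) (fun p _ => hmgf_le p)
      have hsum_exp : ∑ p ∈ s, (t * (if p.1 = astar k then -Q k p.1 else Q k p.1) + t ^ 2 * Z ^ 2 / 8)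
          = t * ((c:ℝ) * Q k a - (c:ℝ) * Q k (astar k)) + (2 * (c:ℝ)) * (t ^ 2 * Z ^ 2 / 8) := by
        rw [hsdef, Finset.sum_product]
        rw [Finset.sum_insert (by simpa using hne), Finset.sum_singleton]
        simp only [hne, if_false, ite_false, if_true, ite_true]
        simp [Finset.sum_const, Finset.card_univ, nsmul_eq_mul]
        ring
      -- numeric bound on the exponent
      have hexp_le : t * ((c:ℝ) * Q k a - (c:ℝ) * Q k (astar k)) + (2 * (c:ℝ)) * (t ^ 2 * Z ^ 2 / 8)
          ≤ -(2 * L) := by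
        have hgap' := hgap k a hne
        have h1 : Q k a - Q k (astar k) ≤ -gp := by
          rw [hgpdef]; linarith [hgap']
        have h2 : t * ((c:ℝ) * Q k a - (c:ℝ) * Q k (astar k)) ≤ t * ((c:ℝ) * (-gp)) := by
          apply mul_le_mul_of_nonneg_left _ ht0
          nlinarith
        have h3 : t * ((c:ℝ) * (-gp)) + (2 * (c:ℝ)) * (t ^ 2 * Z ^ 2 / 8) = -(2 * L) := by
          rw [htdef]
          have hZ2 : Z ^ 2 ≠ 0 := by positivity
          have hgp2' : (c:ℝ) * gp ^ 2 = Z ^ 2 * (2 * L) := by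
            rw [hgp2]; field_simp
          field_simp
          have hS : Real.sqrt (2 * L / c) ^ 2 * c = 2 * L := by
            rw [Real.sq_sqrt (by positivity)]; field_simp
          linear_combination (-4 * Z ^ 2) * hS
        linarith
      -- assemble: toReal bound
      have htoReal : (P {ω | (0:ℝ) ≤ (∑ p ∈ s, Y p) ω}).toReal ≤ δ / M := by
        have hδM1 : δ / M ≤ 1 := by
          rw [div_le_one hMpos]; linarith
        have hδM0 : 0 < δ / M := div_pos hδ0 hMpos
        have e1 : Real.exp (-(2 * L)) = (δ / M) ^ 2 := by
          have : Real.exp L = M / δ := by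
            rw [hLdef, Real.exp_log (div_pos hMpos hδ0)]
          rw [show -(2*L) = (-L) + (-L) by ring, Real.exp_add, Real.exp_neg, this]
          field_simp
        calc (P {ω | (0:ℝ) ≤ (∑ p ∈ s, Y p) ω}).toReal
            ≤ mgf (∑ p ∈ s, Y p) P t := chern
          _ = ∏ p ∈ s, mgf (Y p) P t := hprod
          _ ≤ Real.exp (∑ p ∈ s, (t * (if p.1 = astar k then -Q k p.1 else Q k p.1) + t ^ 2 * Z ^ 2 / 8)) := hprod_le
          _ ≤ Real.exp (-(2 * L)) := by
              rw [hsum_exp]; exact Real.exp_le_exp.2 hexp_le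
          _ = (δ / M) ^ 2 := e1
          _ ≤ δ / M := by nlinarith
      have hEsub : E k a ⊆ {ω | (0:ℝ) ≤ (∑ p ∈ s, Y p) ω} := by
        intro ω hω
        obtain ⟨-, hge⟩ := hω
        have hic : (0:ℝ) < 1 / (c:ℝ) := by positivity
        have : ∑ i, X k (astar k) i ω ≤ ∑ i, X k a i ω :=
          (mul_le_mul_iff_right₀ hic).mp hge
        rw [Set.mem_setOf_eq, hsum ω]
        linarith
      calc P (E k a) ≤ P {ω | (0:ℝ) ≤ (∑ p ∈ s, Y p) ω} := measure_mono hEsub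
        _ ≤ ENNReal.ofReal (δ / M) := by
            rw [ENNReal.le_ofReal_iff_toReal_le (measure_ne_top P _) (by positivity)]
            exact htoReal
  -- union bound
  have hset : {ω | ∃ k : Fin n, ∃ a : A, a ≠ astar k ∧
      (1 / c : ℝ) * ∑ i, X k a i ω ≥ (1 / c : ℝ) * ∑ i, X k (astar k) i ω}
      = ⋃ k : Fin n, ⋃ a : A, E k a := by
    ext ω
    simp [hEdef, Set.mem_iUnion]
  rw [hset]
  calc P (⋃ k : Fin n, ⋃ a : A, E k a)
      ≤ ∑ k : Fin n, P (⋃ a : A, E k a) := by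
        refine (measure_iUnion_le _).trans_eq ?_
        exact tsum_fintype _
    _ ≤ ∑ k : Fin n, ∑ a : A, P (E k a) := by
        refine Finset.sum_le_sum fun k _ => ?_
        refine (measure_iUnion_le _).trans_eq ?_
        exact tsum_fintype _
    _ ≤ ∑ k : Fin n, ∑ a : A, ENNReal.ofReal (δ / M) :=
        Finset.sum_le_sum fun k _ => Finset.sum_le_sum fun a _ => hkey k a
    _ = (n * Fintype.card A : ℕ) * ENNReal.ofReal (δ / M) := by
        simp [Finset.sum_const, Finset.card_univ, nsmul_eq_mul]
        ring
    _ = ENNReal.ofReal ((n * Fintype.card A : ℕ) * (δ / M)) := by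
        rw [ENNReal.ofReal_mul (by positivity), ENNReal.ofReal_natCast]
    _ ≤ ENNReal.ofReal δ := by
        apply ENNReal.ofReal_le_ofReal
        have hne1 : (n:ℝ) ≠ 0 := by linarith
        have hne2 : (Fintype.card A : ℝ) ≠ 0 := by linarith
        have h1 : ((n * Fintype.card A : ℕ) : ℝ) * (δ / M) = δ / 2 := by
          rw [hMdef]
          push_cast
          field_simp
        rw [h1]
        linarith
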